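/- Two-dimensional discrete Cantor FUP submultiplicativity: fix M ≥ 2 and nonempty alphabets A, B ⊂ {0,...,M−1}², and for k ≥ 1, N = M^k, define the 2D Cantor sets C_{k,A}, C_{k,B} ⊂ ℤ_N² and the unitary 2D discrete Fourier transform F_{N×N} on ℂ^{N×N}. Then r_{k₁+k₂} ≤ r_{k₁}·r_{k₂} where r_k = ‖1_{C_{k,A}} F_{N×N} 1_{C_{k,B}}‖ (operator norm with respect to the ℓ² norm on entries). -/

import Mathlib

/-- The unitary two-dimensional discrete Fourier transform matrix on `ℂ^{N×N}`:
entry `(j,ℓ) ↦ N^{-1} exp(-2πi⟨j,ℓ⟩/N)`. -/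
noncomputable def dftMat2 (N : ℕ) : Matrix (Fin N × Fin N) (Fin N × Fin N) ℂ :=
  Matrix.of fun j ℓ => ((N : ℂ))⁻¹ *
    Complex.exp (-2 * Real.pi * Complex.I *
      (((j.1 : ℕ) : ℂ) * ((ℓ.1 : ℕ) : ℂ) + ((j.2 : ℕ) : ℂ) * ((ℓ.2 : ℕ) : ℂ)) / (N : ℂ))

open scoped Classical in
/-- The diagonal matrix of the coordinate projection onto indices in `S ⊂ ℤ_N²`. -/
noncomputable def projMat2 {N : ℕ} (S : Set (ℕ × ℕ)) :
    Matrix (Fin N × Fin N) (Fin N × Fin N) ℂ :=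
  Matrix.of fun j ℓ => if j = ℓ ∧ ((j.1 : ℕ), (j.2 : ℕ)) ∈ S then 1 else 0

/-- The 2D discrete Cantor set: pairs all of whose componentwise base-`M` digit pairs in
positions `< k` lie in the alphabet `A ⊂ ℤ_M²`. -/
def cantor2 (M k : ℕ) (A : Finset (ℕ × ℕ)) : Set (ℕ × ℕ) :=
  {p | ∀ i < k, ((p.1 / M ^ i) % M, (p.2 / M ^ i) % M) ∈ A}

/-- `r_k = ‖1_{C_{k,A}} F_{N×N} 1_{C_{k,B}}‖`, the operator norm with respect to the
`ℓ²` norm on entries, `N = M^k`. -/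
noncomputable def rk2 (M : ℕ) (A B : Finset (ℕ × ℕ)) (k : ℕ) : ℝ :=
  ‖LinearMap.toContinuousLinearMap (Matrix.toEuclideanLin
      (projMat2 (N := M ^ k) (cantor2 M k A) * dftMat2 (M ^ k) *
        projMat2 (cantor2 M k B)))‖

open Matrix Finset
set_option linter.unusedSectionVars false
section Infra

variable {ι κ τ σ : Type*} [Fintype ι] [Fintype κ] [Fintype τ] [Fintype σ]
  [DecidableEq ι] [DecidableEq κ] [DecidableEq τ] [DecidableEq σ]

noncomputable def mnorm (A : Matrix ι κ ℂ) : ℝ :=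
  ‖LinearMap.toContinuousLinearMap (Matrix.toEuclideanLin A)‖

lemma mnorm_nonneg (A : Matrix ι κ ℂ) : 0 ≤ mnorm A := norm_nonneg _

lemma norm_teL_le (A : Matrix ι κ ℂ) (v : EuclideanSpace ℂ κ) :
    ‖(Matrix.toEuclideanLin A) v‖ ≤ mnorm A * ‖v‖ := by
  have h := (LinearMap.toContinuousLinearMap (Matrix.toEuclideanLin A)).le_opNorm v
  simpa [mnorm] using h

lemma mnorm_le_bound (A : Matrix ι κ ℂ) {c : ℝ} (hc : 0 ≤ c)
    (h : ∀ v : EuclideanSpace ℂ κ, ‖(Matrix.toEuclideanLin A) v‖ ≤ c * ‖v‖) :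
    mnorm A ≤ c :=
  ContinuousLinearMap.opNorm_le_bound _ hc (fun v => by simpa using h v)

lemma teL_apply (A : Matrix ι κ ℂ) (v : EuclideanSpace ℂ κ) (i : ι) :
    Matrix.toEuclideanLin A v i = ∑ j, A i j * v j := rfl

lemma euclid_norm_sq (v : EuclideanSpace ℂ ι) : ‖v‖ ^ 2 = ∑ i, ‖v i‖ ^ 2 := by
  rw [EuclideanSpace.norm_eq, Real.sq_sqrt (by positivity)]

lemma norm_le_of_sq_le_sq {a b : ℝ} (ha : 0 ≤ a) (hb : 0 ≤ b) (h : a ^ 2 ≤ b ^ 2) : a ≤ b := by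
  have := Real.sqrt_le_sqrt h
  rwa [Real.sqrt_sq ha, Real.sqrt_sq hb] at this

lemma mnorm_mul_le (A : Matrix ι κ ℂ) (B : Matrix κ τ ℂ) :
    mnorm (A * B) ≤ mnorm A * mnorm B := by
  apply mnorm_le_bound _ (mul_nonneg (mnorm_nonneg A) (mnorm_nonneg B))
  intro v
  have h : Matrix.toEuclideanLin (A * B) v
      = Matrix.toEuclideanLin A (Matrix.toEuclideanLin B v) := by
    rw [Matrix.toEuclideanLin_apply, Matrix.toEuclideanLin_apply, Matrix.toEuclideanLin_apply]
    simp [Matrix.mulVec_mulVec]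
  rw [h, mul_assoc]
  exact le_trans (norm_teL_le _ _)
    (mul_le_mul_of_nonneg_left (norm_teL_le _ _) (mnorm_nonneg A))

lemma mnorm_submatrix_le (A : Matrix ι κ ℂ) (e : τ ≃ ι) (f : σ ≃ κ) :
    mnorm (A.submatrix e f) ≤ mnorm A := by
  apply mnorm_le_bound _ (mnorm_nonneg A)
  intro v
  set w : EuclideanSpace ℂ κ := WithLp.toLp 2 (fun j => v (f.symm j)) with hw
  have hval : ∀ i, (Matrix.toEuclideanLin (A.submatrix e f) v) i
      = (Matrix.toEuclideanLin A w) (e i) := by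
    intro i
    rw [teL_apply, teL_apply]
    refine Fintype.sum_equiv f _ _ fun j => ?_
    rw [Matrix.submatrix_apply, hw]
    exact congrArg (fun z => A (e i) (f j) * v z) (Equiv.symm_apply_apply f j).symm
  have h1 : ‖Matrix.toEuclideanLin (A.submatrix e f) v‖ = ‖Matrix.toEuclideanLin A w‖ := by
    rw [EuclideanSpace.norm_eq, EuclideanSpace.norm_eq]
    congr 1
    rw [← Equiv.sum_comp e (fun i' => ‖Matrix.toEuclideanLin A w i'‖ ^ 2)]
    exact Finset.sum_congr rfl fun i _ => by rw [hval]
  have h2 : ‖w‖ = ‖v‖ := by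
    rw [EuclideanSpace.norm_eq, EuclideanSpace.norm_eq]
    congr 1
    exact Equiv.sum_comp f.symm (fun j => ‖v j‖ ^ 2)
  rw [h1, ← h2]
  exact norm_teL_le A w

lemma mnorm_blockDiag_le (Bk : ι → Matrix κ κ ℂ) {c : ℝ} (hc : 0 ≤ c)
    (h : ∀ x, mnorm (Bk x) ≤ c) :
    mnorm (Matrix.of fun (p q : ι × κ) => if p.1 = q.1 then Bk p.1 p.2 q.2 else 0) ≤ c := by
  set T : Matrix (ι × κ) (ι × κ) ℂ :=
    Matrix.of fun (p q : ι × κ) => if p.1 = q.1 then Bk p.1 p.2 q.2 else 0 with hT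
  apply mnorm_le_bound _ hc
  intro v
  have hval : ∀ x y, (Matrix.toEuclideanLin T v) (x, y)
      = (Matrix.toEuclideanLin (Bk x) (WithLp.toLp 2 (fun y' => v (x, y')))) y := by
    intro x y
    rw [teL_apply, teL_apply, Fintype.sum_prod_type]
    rw [Finset.sum_eq_single x]
    · refine Finset.sum_congr rfl fun y' _ => ?_
      simp [hT]
    · intro b _ hb
      apply Finset.sum_eq_zero
      intro y' _
      simp [hT, Ne.symm hb]
    · intro hx; exact absurd (Finset.mem_univ x) hx
  set u : ι → EuclideanSpace ℂ κ := fun x => WithLp.toLp 2 (fun y' => v (x, y')) with hu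
  apply norm_le_of_sq_le_sq (norm_nonneg _) (by positivity)
  rw [euclid_norm_sq, Fintype.sum_prod_type, mul_pow, euclid_norm_sq, Fintype.sum_prod_type,
    Finset.mul_sum]
  refine Finset.sum_le_sum fun x _ => ?_
  have h1 : ∑ y, ‖Matrix.toEuclideanLin T v (x, y)‖ ^ 2
      = ‖Matrix.toEuclideanLin (Bk x) (u x)‖ ^ 2 := by
    rw [euclid_norm_sq]
    exact Finset.sum_congr rfl fun y _ => by rw [hval]
  rw [h1]
  have h2 : ‖Matrix.toEuclideanLin (Bk x) (u x)‖ ≤ c * ‖u x‖ :=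
    le_trans (norm_teL_le (Bk x) _) (mul_le_mul_of_nonneg_right (h x) (norm_nonneg _))
  calc ‖Matrix.toEuclideanLin (Bk x) (u x)‖ ^ 2
      ≤ (c * ‖u x‖) ^ 2 := pow_le_pow_left₀ (norm_nonneg _) h2 2
    _ = c ^ 2 * ∑ y, ‖v (x, y)‖ ^ 2 := by
        rw [mul_pow, euclid_norm_sq]

lemma mnorm_diagonal_le_one (d : ι → ℂ) (hd : ∀ i, ‖d i‖ ≤ 1) :
    mnorm (Matrix.diagonal d) ≤ 1 := by
  apply mnorm_le_bound _ zero_le_one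
  intro v
  apply norm_le_of_sq_le_sq (norm_nonneg _) (by positivity)
  rw [euclid_norm_sq, mul_pow, one_pow, one_mul, euclid_norm_sq]
  refine Finset.sum_le_sum fun i _ => ?_
  have h1 : Matrix.toEuclideanLin (Matrix.diagonal d) v i = d i * v i := by
    rw [teL_apply]
    simp [Matrix.diagonal_apply, ite_mul, zero_mul]
  rw [h1, norm_mul]
  have := mul_le_mul_of_nonneg_right (hd i) (norm_nonneg (v i))
  calc (‖d i‖ * ‖v i‖) ^ 2 ≤ (1 * ‖v i‖) ^ 2 := pow_le_pow_left₀ (by positivity) (by simpa using this) 2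
    _ = ‖v i‖ ^ 2 := by ring

end Infra


lemma digit_add_high {M k1 : ℕ} (hM : 0 < M) {a : ℕ} (ha : a < M ^ k1) (b i : ℕ) :
    (a + M ^ k1 * b) / M ^ i % M = if i < k1 then a / M ^ i % M else b / M ^ (i - k1) % M := by
  split_ifs with hi
  · have h1 : M ^ k1 = M ^ i * M ^ (k1 - i) := by rw [← pow_add]; congr 1; omega
    rw [h1, mul_assoc, Nat.add_mul_div_left _ _ (pow_pos hM i)]
    have h2 : M ^ (k1 - i) = M * M ^ (k1 - i - 1) := by
      rw [← pow_succ']; congr 1; omega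
    rw [h2, mul_assoc, Nat.add_mul_mod_self_left]
  · have h1 : M ^ i = M ^ k1 * M ^ (i - k1) := by rw [← pow_add]; congr 1; omega
    rw [h1, ← Nat.div_div_eq_div_mul, Nat.add_mul_div_left _ _ (pow_pos hM k1),
      Nat.div_eq_of_lt ha, zero_add]

lemma cantor2_split {M k1 k2 : ℕ} (hM : 0 < M) (A : Finset (ℕ × ℕ)) {a1 a2 : ℕ} (b1 b2 : ℕ)
    (ha1 : a1 < M ^ k1) (ha2 : a2 < M ^ k1) :
    ((a1 + M ^ k1 * b1, a2 + M ^ k1 * b2) ∈ cantor2 M (k1 + k2) A)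
      ↔ ((a1, a2) ∈ cantor2 M k1 A ∧ (b1, b2) ∈ cantor2 M k2 A) := by
  simp only [cantor2, Set.mem_setOf_eq]
  constructor
  · intro h
    constructor
    · intro i hi
      have h' := h i (by omega)
      rwa [digit_add_high hM ha1, digit_add_high hM ha2, if_pos hi, if_pos hi] at h'
    · intro i hi
      have h' := h (k1 + i) (by omega)
      rwa [digit_add_high hM ha1, digit_add_high hM ha2, if_neg (by omega), if_neg (by omega),
        Nat.add_sub_cancel_left] at h'
  · rintro ⟨hA1, hA2⟩ i hi
    rw [digit_add_high hM ha1, digit_add_high hM ha2]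
    split_ifs with h'
    · exact hA1 i h'
    · exact hA2 (i - k1) (by omega)

def finSplitLow {N N1 N2 : ℕ} (h1 : 0 < N1) (hN : N = N1 * N2) :
    Fin N ≃ Fin N1 × Fin N2 where
  toFun j := (⟨j % N1, Nat.mod_lt _ h1⟩, ⟨j / N1, by
    apply Nat.div_lt_of_lt_mul; exact lt_of_lt_of_eq j.2 hN⟩)
  invFun p := ⟨p.1 + N1 * p.2, by
    rw [hN]
    have hb : N1 * (p.2.1 + 1) ≤ N1 * N2 := Nat.mul_le_mul_left _ (by omega)
    have : p.1.1 + N1 * p.2.1 < N1 * (p.2.1 + 1) := by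
      rw [Nat.mul_add, Nat.mul_one]; omega
    omega⟩
  left_inv j := by
    ext
    simp [Nat.mod_add_div]
  right_inv p := by
    ext
    · simp [Nat.add_mul_mod_self_left, Nat.mod_eq_of_lt p.1.2]
    · simp [Nat.add_mul_div_left _ _ h1, Nat.div_eq_of_lt p.1.2]

def finSplitHigh {N N1 N2 : ℕ} (h2 : 0 < N2) (hN : N = N2 * N1) :
    Fin N ≃ Fin N1 × Fin N2 :=
  (finSplitLow h2 hN).trans (Equiv.prodComm _ _)

@[simp] lemma finSplitLow_symm_val {N N1 N2 : ℕ} (h1 : 0 < N1) (hN : N = N1 * N2)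
    (p : Fin N1 × Fin N2) : (((finSplitLow h1 hN).symm p : Fin N) : ℕ) = p.1 + N1 * p.2 := rfl

@[simp] lemma finSplitHigh_symm_val {N N1 N2 : ℕ} (h2 : 0 < N2) (hN : N = N2 * N1)
    (p : Fin N1 × Fin N2) : (((finSplitHigh h2 hN).symm p : Fin N) : ℕ) = p.2 + N2 * p.1 := rfl
open scoped Classical in
lemma projMat2_eq {N : ℕ} (S : Set (ℕ × ℕ)) :
    projMat2 (N := N) S
      = Matrix.diagonal (fun j => if ((j.1 : ℕ), (j.2 : ℕ)) ∈ S then (1 : ℂ) else 0) := by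
  ext j ℓ
  by_cases h : j = ℓ
  · subst h; simp [projMat2, Matrix.diagonal_apply_eq]
  · simp [projMat2, Matrix.diagonal_apply_ne _ h, h]

open scoped Classical in
lemma triple_apply {n : ℕ} (S0 S1 : Set (ℕ × ℕ)) (F : Matrix (Fin n × Fin n) (Fin n × Fin n) ℂ)
    (j ℓ : Fin n × Fin n) :
    (projMat2 (N := n) S0 * F * projMat2 (N := n) S1) j ℓ
      = (if ((j.1 : ℕ), (j.2 : ℕ)) ∈ S0 then 1 else 0) * F j ℓ
        * (if ((ℓ.1 : ℕ), (ℓ.2 : ℕ)) ∈ S1 then 1 else 0) := by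
  rw [projMat2_eq, projMat2_eq, Matrix.mul_diagonal, Matrix.diagonal_mul]

lemma phase_split {M k1 k2 : ℕ} (hM : 0 < M) (a1 a2 b1 b2 c1 c2 d1 d2 : ℕ) :
    ((M ^ (k1 + k2) : ℕ) : ℂ)⁻¹ * Complex.exp (-2 * Real.pi * Complex.I *
        (((a1 + M ^ k1 * b1 : ℕ) : ℂ) * ((c1 + M ^ k2 * d1 : ℕ) : ℂ)
          + ((a2 + M ^ k1 * b2 : ℕ) : ℂ) * ((c2 + M ^ k2 * d2 : ℕ) : ℂ))
        / ((M ^ (k1 + k2) : ℕ) : ℂ))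
    = (((M ^ k2 : ℕ) : ℂ)⁻¹ * Complex.exp (-2 * Real.pi * Complex.I *
        (((b1 : ℕ) : ℂ) * ((c1 : ℕ) : ℂ) + ((b2 : ℕ) : ℂ) * ((c2 : ℕ) : ℂ)) / ((M ^ k2 : ℕ) : ℂ)))
      * Complex.exp (-2 * Real.pi * Complex.I *
        (((a1 : ℕ) : ℂ) * ((c1 : ℕ) : ℂ) + ((a2 : ℕ) : ℂ) * ((c2 : ℕ) : ℂ))
        / ((M ^ (k1 + k2) : ℕ) : ℂ))
      * (((M ^ k1 : ℕ) : ℂ)⁻¹ * Complex.exp (-2 * Real.pi * Complex.I *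
        (((a1 : ℕ) : ℂ) * ((d1 : ℕ) : ℂ) + ((a2 : ℕ) : ℂ) * ((d2 : ℕ) : ℂ))
        / ((M ^ k1 : ℕ) : ℂ))) := by
  have hM0 : (M : ℂ) ≠ 0 := Nat.cast_ne_zero.mpr (by omega)
  have h1 : ((M : ℂ)) ^ k1 ≠ 0 := pow_ne_zero _ hM0
  have h2 : ((M : ℂ)) ^ k2 ≠ 0 := pow_ne_zero _ hM0
  have key : -2 * (Real.pi : ℂ) * Complex.I *
        (((a1 : ℂ) + (M : ℂ) ^ k1 * b1) * ((c1 : ℂ) + (M : ℂ) ^ k2 * d1)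
          + ((a2 : ℂ) + (M : ℂ) ^ k1 * b2) * ((c2 : ℂ) + (M : ℂ) ^ k2 * d2))
        / ((M : ℂ) ^ k1 * (M : ℂ) ^ k2)
      = (-2 * (Real.pi : ℂ) * Complex.I * ((b1 : ℂ) * c1 + (b2 : ℂ) * c2) / ((M : ℂ) ^ k2)
        + -2 * (Real.pi : ℂ) * Complex.I * ((a1 : ℂ) * c1 + (a2 : ℂ) * c2)
            / ((M : ℂ) ^ k1 * (M : ℂ) ^ k2)
        + -2 * (Real.pi : ℂ) * Complex.I * ((a1 : ℂ) * d1 + (a2 : ℂ) * d2) / ((M : ℂ) ^ k1))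
        + ((-(b1 * d1 + b2 * d2) : ℤ) : ℂ) * (2 * (Real.pi : ℂ) * Complex.I) := by
    push_cast
    field_simp
    ring
  push_cast [pow_add]
  rw [key, Complex.exp_add, Complex.exp_add, Complex.exp_add,
    Complex.exp_int_mul_two_pi_mul_I, mul_one, mul_inv]
  ring

def eSplit2 {N N1 N2 : ℕ} (e : Fin N ≃ Fin N1 × Fin N2) :
    (Fin N × Fin N) ≃ ((Fin N1 × Fin N1) × (Fin N2 × Fin N2)) :=
  (e.prodCongr e).trans (Equiv.prodProdProdComm _ _ _ _)

lemma eSplit2_symm_apply {N N1 N2 : ℕ} (e : Fin N ≃ Fin N1 × Fin N2)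
    (p : (Fin N1 × Fin N1) × (Fin N2 × Fin N2)) :
    (eSplit2 e).symm p = (e.symm (p.1.1, p.2.1), e.symm (p.1.2, p.2.2)) := rfl

lemma rk2_eq_mnorm (M : ℕ) (A B : Finset (ℕ × ℕ)) (k : ℕ) :
    rk2 M A B k = mnorm (projMat2 (N := M ^ k) (cantor2 M k A) * dftMat2 (M ^ k) *
      projMat2 (cantor2 M k B)) := rfl

lemma rk2_nonneg (M : ℕ) (A B : Finset (ℕ × ℕ)) (k : ℕ) : 0 ≤ rk2 M A B k := norm_nonneg _

set_option maxHeartbeats 1600000 in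
/-- Submultiplicativity of the 2D discrete Cantor FUP norms:
`r_{k₁+k₂} ≤ r_{k₁} · r_{k₂}`. -/
theorem stmt19 (M : ℕ) (hM : 2 ≤ M) (A B : Finset (ℕ × ℕ))
    (hA : A.Nonempty) (hB : B.Nonempty)
    (hAM : ∀ p ∈ A, p.1 < M ∧ p.2 < M) (hBM : ∀ p ∈ B, p.1 < M ∧ p.2 < M)
    (k1 k2 : ℕ) (h1 : 1 ≤ k1) (h2 : 1 ≤ k2) :
    rk2 M A B (k1 + k2) ≤ rk2 M A B k1 * rk2 M A B k2 := by
  classical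
  have hM0 : 0 < M := by omega
  have h1p : 0 < M ^ k1 := pow_pos hM0 k1
  have h2p : 0 < M ^ k2 := pow_pos hM0 k2
  have hNfact : M ^ (k1 + k2) = M ^ k1 * M ^ k2 := pow_add M k1 k2
  set sL : Fin (M ^ (k1 + k2)) ≃ Fin (M ^ k1) × Fin (M ^ k2) := finSplitLow h1p hNfact with hsL
  set sH : Fin (M ^ (k1 + k2)) ≃ Fin (M ^ k1) × Fin (M ^ k2) :=
    finSplitHigh h2p (hNfact.trans (mul_comm _ _)) with hsH
  set R1 := projMat2 (N := M ^ k1) (cantor2 M k1 A) * dftMat2 (M ^ k1) *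
    projMat2 (cantor2 M k1 B) with hR1
  set R2 := projMat2 (N := M ^ k2) (cantor2 M k2 A) * dftMat2 (M ^ k2) *
    projMat2 (cantor2 M k2 B) with hR2
  set G := projMat2 (N := M ^ (k1 + k2)) (cantor2 M (k1 + k2) A) * dftMat2 (M ^ (k1 + k2)) *
    projMat2 (cantor2 M (k1 + k2) B) with hG
  set D : (Fin (M ^ k1) × Fin (M ^ k1)) →
      Matrix (Fin (M ^ k2) × Fin (M ^ k2)) (Fin (M ^ k2) × Fin (M ^ k2)) ℂ := fun x =>
    Matrix.diagonal fun c => Complex.exp (-2 * Real.pi * Complex.I *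
      (((x.1 : ℕ) : ℂ) * ((c.1 : ℕ) : ℂ) + ((x.2 : ℕ) : ℂ) * ((c.2 : ℕ) : ℂ))
      / ((M ^ (k1 + k2) : ℕ) : ℂ)) with hD
  set S : Matrix ((Fin (M ^ k1) × Fin (M ^ k1)) × (Fin (M ^ k2) × Fin (M ^ k2)))
      ((Fin (M ^ k1) × Fin (M ^ k1)) × (Fin (M ^ k2) × Fin (M ^ k2))) ℂ :=
    Matrix.of fun p q => if p.1 = q.1 then (R2 * D p.1) p.2 q.2 else 0 with hS
  set T : Matrix ((Fin (M ^ k1) × Fin (M ^ k1)) × (Fin (M ^ k2) × Fin (M ^ k2)))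
      ((Fin (M ^ k1) × Fin (M ^ k1)) × (Fin (M ^ k2) × Fin (M ^ k2))) ℂ :=
    Matrix.of fun p q => if p.2 = q.2 then R1 p.1 q.1 else 0 with hT
  -- the factorization
  have hfact : G.submatrix (eSplit2 sL).symm (eSplit2 sH).symm = S * T := by
    ext p q
    have hRHS : (S * T) p q = (R2 * D p.1) p.2 q.2 * R1 p.1 q.1 := by
      rw [Matrix.mul_apply, Fintype.sum_prod_type]
      rw [Finset.sum_eq_single p.1]
      · rw [Finset.sum_eq_single q.2]
        · simp [hS, hT]
        · intro b _ hb; simp [hS, hT, hb]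
        · intro hx; exact absurd (Finset.mem_univ q.2) hx
      · intro b _ hb
        apply Finset.sum_eq_zero
        intro y'' _
        simp [hS, hT, Ne.symm hb]
      · intro hx; exact absurd (Finset.mem_univ p.1) hx
    rw [Matrix.submatrix_apply, hRHS, eSplit2_symm_apply, eSplit2_symm_apply]
    rw [hG, triple_apply, hR1, triple_apply, hR2, Matrix.mul_diagonal, triple_apply]
    have hv1 : ((sL.symm (p.1.1, p.2.1) : Fin (M ^ (k1 + k2))) : ℕ)
        = (p.1.1 : ℕ) + M ^ k1 * (p.2.1 : ℕ) := rfl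
    have hv2 : ((sL.symm (p.1.2, p.2.2) : Fin (M ^ (k1 + k2))) : ℕ)
        = (p.1.2 : ℕ) + M ^ k1 * (p.2.2 : ℕ) := rfl
    have hw1 : ((sH.symm (q.1.1, q.2.1) : Fin (M ^ (k1 + k2))) : ℕ)
        = (q.2.1 : ℕ) + M ^ k2 * (q.1.1 : ℕ) := rfl
    have hw2 : ((sH.symm (q.1.2, q.2.2) : Fin (M ^ (k1 + k2))) : ℕ)
        = (q.2.2 : ℕ) + M ^ k2 * (q.1.2 : ℕ) := rfl
    simp only [hv1, hv2, hw1, hw2, dftMat2, Matrix.of_apply]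
    rw [show ((((p.1.1 : ℕ) + M ^ k1 * (p.2.1 : ℕ) : ℕ)),
        (((p.1.2 : ℕ) + M ^ k1 * (p.2.2 : ℕ) : ℕ))) = (((p.1.1 : ℕ) + M ^ k1 * (p.2.1 : ℕ)),
        ((p.1.2 : ℕ) + M ^ k1 * (p.2.2 : ℕ))) from rfl]
    rw [if_congr (cantor2_split hM0 A (p.2.1 : ℕ) (p.2.2 : ℕ) p.1.1.isLt p.1.2.isLt) rfl rfl]
    have hsplitB : (((q.2.1 : ℕ) + M ^ k2 * (q.1.1 : ℕ), (q.2.2 : ℕ) + M ^ k2 * (q.1.2 : ℕ))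
        ∈ cantor2 M (k1 + k2) B)
        ↔ (((q.2.1 : ℕ), (q.2.2 : ℕ)) ∈ cantor2 M k2 B
            ∧ ((q.1.1 : ℕ), (q.1.2 : ℕ)) ∈ cantor2 M k1 B) := by
      rw [Nat.add_comm k1 k2]
      exact cantor2_split hM0 B (q.1.1 : ℕ) (q.1.2 : ℕ) q.2.1.isLt q.2.2.isLt
    rw [if_congr hsplitB rfl rfl]
    by_cases hA1 : ((p.1.1 : ℕ), (p.1.2 : ℕ)) ∈ cantor2 M k1 A
    · by_cases hA2 : ((p.2.1 : ℕ), (p.2.2 : ℕ)) ∈ cantor2 M k2 A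
      · by_cases hB1 : ((q.1.1 : ℕ), (q.1.2 : ℕ)) ∈ cantor2 M k1 B
        · by_cases hB2 : ((q.2.1 : ℕ), (q.2.2 : ℕ)) ∈ cantor2 M k2 B
          · simp only [hA1, hA2, hB1, hB2, and_self, if_true, one_mul, mul_one]
            have hps := phase_split (M := M) (k1 := k1) (k2 := k2) hM0
              (p.1.1 : ℕ) (p.1.2 : ℕ) (p.2.1 : ℕ) (p.2.2 : ℕ)
              (q.2.1 : ℕ) (q.2.2 : ℕ) (q.1.1 : ℕ) (q.1.2 : ℕ)
            push_cast at hps ⊢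
            rw [hps]
          · simp [hA1, hA2, hB1, hB2]
        · simp [hA1, hA2, hB1]
      · simp [hA1, hA2]
    · simp [hA1]
  -- norm bound for T
  have hrk1 : rk2 M A B k1 = mnorm R1 := rk2_eq_mnorm M A B k1
  have hrk2 : rk2 M A B k2 = mnorm R2 := rk2_eq_mnorm M A B k2
  have hT_le : mnorm T ≤ rk2 M A B k1 := by
    have hTsub : T = (Matrix.of fun (p q : (Fin (M ^ k2) × Fin (M ^ k2)) ×
        (Fin (M ^ k1) × Fin (M ^ k1))) => if p.1 = q.1 then R1 p.2 q.2 else 0).submatrix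
        (Equiv.prodComm _ _) (Equiv.prodComm _ _) := by
      ext p q
      simp [hT, Equiv.prodComm]
    rw [hTsub]
    refine le_trans (mnorm_submatrix_le _ _ _)
      (mnorm_blockDiag_le (fun _ : Fin (M ^ k2) × Fin (M ^ k2) => R1)
        (rk2_nonneg M A B k1) ?_)
    intro _
    rw [hrk1]
  -- norm bound for S
  have hS_le : mnorm S ≤ rk2 M A B k2 := by
    refine mnorm_blockDiag_le (fun x => R2 * D x) (rk2_nonneg M A B k2) ?_
    intro x
    refine le_trans (mnorm_mul_le _ _) ?_
    have hDle : mnorm (D x) ≤ 1 := by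
      refine mnorm_diagonal_le_one _ fun c => ?_
      have harg : -2 * (Real.pi : ℂ) * Complex.I *
          (((x.1 : ℕ) : ℂ) * ((c.1 : ℕ) : ℂ) + ((x.2 : ℕ) : ℂ) * ((c.2 : ℕ) : ℂ))
          / ((M ^ (k1 + k2) : ℕ) : ℂ)
          = ((-2 * Real.pi * (((x.1 : ℕ) : ℝ) * ((c.1 : ℕ) : ℝ) + ((x.2 : ℕ) : ℝ) * ((c.2 : ℕ) : ℝ))
             / ((M ^ (k1 + k2) : ℕ) : ℝ) : ℝ) : ℂ) * Complex.I := by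
        push_cast
        ring
      rw [harg, Complex.norm_exp_ofReal_mul_I]
    calc mnorm R2 * mnorm (D x) ≤ mnorm R2 * 1 :=
          mul_le_mul_of_nonneg_left hDle (mnorm_nonneg R2)
      _ = rk2 M A B k2 := by rw [mul_one, hrk2]
  -- assemble
  have hmain : G = (S * T).submatrix (eSplit2 sL) (eSplit2 sH) := by
    rw [← hfact, Matrix.submatrix_submatrix]
    ext p q
    simp
  calc rk2 M A B (k1 + k2) = mnorm G := rk2_eq_mnorm M A B (k1 + k2)
    _ = mnorm ((S * T).submatrix (eSplit2 sL) (eSplit2 sH)) := by rw [← hmain]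
    _ ≤ mnorm (S * T) := mnorm_submatrix_le _ _ _
    _ ≤ mnorm S * mnorm T := mnorm_mul_le _ _
    _ ≤ rk2 M A B k2 * rk2 M A B k1 :=
        mul_le_mul hS_le hT_le (mnorm_nonneg T) (rk2_nonneg M A B k2)
    _ = rk2 M A B k1 * rk2 M A B k2 := mul_comm _ _
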